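/- Suppose the transmissions are independent across links. Then the diagonal entries of W̃ = E[(Ŵ)²] - (E[Ŵ])² satisfy W̃_ii = 2 Σ_{k≠i} w_{ki}² (p_{ki} - p_{ki}²) and the off-diagonal entries satisfy W̃_ij = 2 w_{ij}² (p_{ij}² - p_{ij}) for i ≠ j, where Ŵ = I + W ⊙ S - Diag(W S), S is the symmetric 0-1 transmission matrix with zero diagonal whose entry s_{ij} is Bernoulli(p_{ij}), and for i < j the variables s_{ij} are independent with s_{ij} = s_{ji}. -/

import Mathlib

open Matrix BigOperators MeasureTheory ProbabilityTheory

def IsDoublyStochastic {M : ℕ} (A : Matrix (Fin M) (Fin M) ℝ) : Prop :=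
  (∀ i j, 0 ≤ A i j) ∧ (∀ i, ∑ j, A i j = 1) ∧ (∀ j, ∑ i, A i j = 1)

/-- The random mixing matrix Ŵ = I + W ⊙ S - Diag(W S). -/
noncomputable def mixingMatrix {M : ℕ} (W S : Matrix (Fin M) (Fin M) ℝ) :
    Matrix (Fin M) (Fin M) ℝ :=
  1 + Matrix.hadamard W S - Matrix.diagonal fun i => (W * S) i i

/-- Entries of the covariance-type matrix W̃ = E[(Ŵ)²] - (E[Ŵ])² under independent
    Bernoulli link activations. -/
theorem stmt15 {M : ℕ} {Ω : Type*} [MeasurableSpace Ω] (μ : Measure Ω)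
    [IsProbabilityMeasure μ]
    (W P : Matrix (Fin M) (Fin M) ℝ)
    (hWsym : Wᵀ = W) (hWds : IsDoublyStochastic W)
    (hP01 : ∀ i j, P i j ∈ Set.Icc (0 : ℝ) 1) (hPdiag : ∀ i, P i i = 0)
    (S : Ω → Matrix (Fin M) (Fin M) ℝ)
    (hmeas : ∀ i j, Measurable fun ω => S ω i j)
    (hSsym : ∀ ω, (S ω)ᵀ = S ω)
    (hSdiag : ∀ ω i, S ω i i = 0)
    (hS01 : ∀ ω i j, S ω i j = 0 ∨ S ω i j = 1)
    (hmean : ∀ i j, ∫ ω, S ω i j ∂μ = P i j)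
    (hindep : ∀ i j k l : Fin M, i < j → k < l → (i, j) ≠ (k, l) →
      IndepFun (fun ω => S ω i j) (fun ω => S ω k l) μ)
    (Ebar E2 Wt : Matrix (Fin M) (Fin M) ℝ)
    (hEbar : ∀ i j, Ebar i j = ∫ ω, mixingMatrix W (S ω) i j ∂μ)
    (hE2 : ∀ i j, E2 i j = ∫ ω, (mixingMatrix W (S ω) * mixingMatrix W (S ω)) i j ∂μ)
    (hWt : Wt = E2 - Ebar * Ebar) :
    (∀ i, Wt i i = 2 * ∑ k ∈ Finset.univ.erase i, (W k i) ^ 2 * (P k i - (P k i) ^ 2)) ∧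
    (∀ i j, i ≠ j → Wt i j = 2 * (W i j) ^ 2 * ((P i j) ^ 2 - P i j)) := by
  obtain ⟨hW0, hWrow, _⟩ := hWds
  have hswap : ∀ (i j : Fin M) (ω : Ω), S ω j i = S ω i j := fun i j ω =>
    congrFun (congrFun (hSsym ω) i) j
  have hWs : ∀ i j : Fin M, W j i = W i j := fun i j => congrFun (congrFun hWsym i) j
  have hS0 : ∀ ω i j, 0 ≤ S ω i j := fun ω i j => by
    rcases hS01 ω i j with h | h <;> simp [h]
  have hS1 : ∀ ω i j, S ω i j ≤ 1 := fun ω i j => by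
    rcases hS01 ω i j with h | h <;> simp [h]
  have hPsym : ∀ i j : Fin M, P j i = P i j := by
    intro i j
    rw [← hmean j i, ← hmean i j]
    exact integral_congr_ae (Filter.Eventually.of_forall fun ω => hswap i j ω)
  have hbd : ∀ (f : Ω → ℝ) (C : ℝ), Measurable f → (∀ ω, |f ω| ≤ C) → Integrable f μ :=
    fun f C hm hb =>
      (integrable_const C).mono' hm.aestronglyMeasurable
        (Filter.Eventually.of_forall fun ω => by simpa [Real.norm_eq_abs] using hb ω)
  have hintS : ∀ i j, Integrable (fun ω => S ω i j) μ := fun i j =>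
    hbd _ 1 (hmeas i j) (fun ω => by rcases hS01 ω i j with h | h <;> simp [h])
  have hintSS : ∀ i j k l, Integrable (fun ω => S ω i j * S ω k l) μ := fun i j k l =>
    hbd _ 1 ((hmeas i j).mul (hmeas k l)) (fun ω => by
      rw [abs_mul, abs_of_nonneg (hS0 ω i j), abs_of_nonneg (hS0 ω k l)]
      nlinarith [hS0 ω i j, hS1 ω i j, hS0 ω k l, hS1 ω k l])
  have keyself : ∀ i j, ∫ ω, S ω i j * S ω i j ∂μ = P i j := by
    intro i j
    rw [← hmean i j]
    exact integral_congr_ae (Filter.Eventually.of_forall fun ω => by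
      rcases hS01 ω i j with h | h <;> simp [h])
  have keylt : ∀ i j k l : Fin M, i < j → k < l → ¬(i = k ∧ j = l) →
      ∫ ω, S ω i j * S ω k l ∂μ = P i j * P k l := by
    intro i j k l hij hkl hne
    have h := (hindep i j k l hij hkl (by simpa [Prod.ext_iff] using hne)).integral_mul_eq_mul_integral
      (hintS i j).aestronglyMeasurable (hintS k l).aestronglyMeasurable
    rw [← hmean i j, ← hmean k l]
    simpa [Pi.mul_apply] using h
  have intswapL : ∀ i j k l : Fin M,
      ∫ ω, S ω i j * S ω k l ∂μ = ∫ ω, S ω j i * S ω k l ∂μ := by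
    intro i j k l
    refine integral_congr_ae (Filter.Eventually.of_forall fun ω => ?_)
    show S ω i j * S ω k l = S ω j i * S ω k l
    rw [hswap j i ω]
  have intswapR : ∀ i j k l : Fin M,
      ∫ ω, S ω i j * S ω k l ∂μ = ∫ ω, S ω i j * S ω l k ∂μ := by
    intro i j k l
    refine integral_congr_ae (Filter.Eventually.of_forall fun ω => ?_)
    show S ω i j * S ω k l = S ω i j * S ω l k
    rw [hswap l k ω]
  have key : ∀ i j k l : Fin M, ¬(i = k ∧ j = l) → ¬(i = l ∧ j = k) →
      ∫ ω, S ω i j * S ω k l ∂μ = P i j * P k l := by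
    intro i j k l h1 h2
    rcases eq_or_ne i j with rfl | hij
    · simp [hSdiag, hPdiag]
    rcases eq_or_ne k l with rfl | hkl
    · simp [hSdiag, hPdiag]
    rcases hij.lt_or_gt with hij' | hij' <;> rcases hkl.lt_or_gt with hkl' | hkl'
    · exact keylt i j k l hij' hkl' h1
    · rw [intswapR i j k l, keylt i j l k hij' hkl' h2, hPsym l k]
    · rw [intswapL i j k l, keylt j i k l hij' hkl' (fun h => h2 ⟨h.2, h.1⟩), hPsym j i]
    · rw [intswapL i j k l, intswapR j i k l,
        keylt j i l k hij' hkl' (fun h => h1 ⟨h.2, h.1⟩), hPsym j i, hPsym l k]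
  -- mixing matrix entries
  have hmixd : ∀ (i : Fin M) (ω : Ω),
      mixingMatrix W (S ω) i i = 1 - ∑ l, W i l * S ω i l := by
    intro i ω
    simp only [mixingMatrix, Matrix.sub_apply, Matrix.add_apply, Matrix.one_apply_eq,
      Matrix.hadamard_apply, Matrix.diagonal_apply_eq, Matrix.mul_apply, hSdiag, mul_zero,
      add_zero]
    congr 1
    exact Finset.sum_congr rfl fun l _ => by rw [hswap i l ω]
  have hmixo : ∀ (i j : Fin M), i ≠ j → ∀ ω,
      mixingMatrix W (S ω) i j = W i j * S ω i j := by
    intro i j h ω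
    simp [mixingMatrix, Matrix.sub_apply, Matrix.add_apply, Matrix.one_apply_ne h,
      Matrix.hadamard_apply, Matrix.diagonal_apply_ne _ h]
  have hmeasM : ∀ i j, Measurable fun ω => mixingMatrix W (S ω) i j := by
    intro i j
    rcases eq_or_ne i j with rfl | h
    · simp only [hmixd]
      exact measurable_const.sub (Finset.measurable_sum _ fun l _ => (hmeas i l).const_mul _)
    · simp only [hmixo i j h]
      exact (hmeas i j).const_mul _
  have hW1 : ∀ i j, W i j ≤ 1 := fun i j => by
    calc W i j ≤ ∑ l, W i l := Finset.single_le_sum (fun l _ => hW0 i l) (Finset.mem_univ j)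
      _ = 1 := hWrow i
  have hMb : ∀ i j ω, |mixingMatrix W (S ω) i j| ≤ 2 := by
    intro i j ω
    rcases eq_or_ne i j with rfl | h
    · rw [hmixd]
      have h0 : 0 ≤ ∑ l, W i l * S ω i l :=
        Finset.sum_nonneg fun l _ => mul_nonneg (hW0 i l) (hS0 ω i l)
      have h1 : ∑ l, W i l * S ω i l ≤ 1 := by
        calc ∑ l, W i l * S ω i l ≤ ∑ l, W i l :=
              Finset.sum_le_sum fun l _ => by nlinarith [hW0 i l, hS1 ω i l, hS0 ω i l]
          _ = 1 := hWrow i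
      rw [abs_le]; constructor <;> linarith
    · rw [hmixo i j h, abs_mul, abs_of_nonneg (hW0 i j), abs_of_nonneg (hS0 ω i j)]
      nlinarith [hW1 i j, hS1 ω i j, hW0 i j, hS0 ω i j]
  have hintM : ∀ i j, Integrable (fun ω => mixingMatrix W (S ω) i j) μ := fun i j =>
    hbd _ 2 (hmeasM i j) (fun ω => hMb i j ω)
  have hintMM : ∀ i j k l,
      Integrable (fun ω => mixingMatrix W (S ω) i j * mixingMatrix W (S ω) k l) μ :=
    fun i j k l =>
      hbd _ 4 ((hmeasM i j).mul (hmeasM k l)) (fun ω => by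
        rw [abs_mul]
        nlinarith [hMb i j ω, hMb k l ω, abs_nonneg (mixingMatrix W (S ω) i j),
          abs_nonneg (mixingMatrix W (S ω) k l)])
  -- Ebar entries
  have hEd : ∀ i, Ebar i i = 1 - ∑ l, W i l * P i l := by
    intro i
    rw [hEbar i i]
    simp only [hmixd]
    rw [integral_sub (integrable_const 1)
        (integrable_finset_sum _ fun l _ => (hintS i l).const_mul _), integral_const,
      integral_finset_sum _ fun l _ => (hintS i l).const_mul _]
    simp only [integral_const_mul, hmean, measure_univ, probReal_univ, ENNReal.toReal_one, smul_eq_mul, one_mul, mul_one]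
  have hEo : ∀ i j, i ≠ j → Ebar i j = W i j * P i j := by
    intro i j h
    rw [hEbar i j]
    simp only [hmixo i j h, integral_const_mul, hmean]
  -- Wt as a sum of differences
  have hWt' : ∀ i j, Wt i j = ∑ k,
      ((∫ ω, mixingMatrix W (S ω) i k * mixingMatrix W (S ω) k j ∂μ) - Ebar i k * Ebar k j) := by
    intro i j
    rw [hWt]
    simp only [Matrix.sub_apply, Matrix.mul_apply]
    rw [hE2 i j]
    simp only [Matrix.mul_apply]
    rw [integral_finset_sum _ fun k _ => hintMM i k k j, ← Finset.sum_sub_distrib]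
  -- cross terms vanish
  have Dcross : ∀ i j k : Fin M, i ≠ j → k ≠ i → k ≠ j →
      (∫ ω, mixingMatrix W (S ω) i k * mixingMatrix W (S ω) k j ∂μ) = Ebar i k * Ebar k j := by
    intro i j k hij hki hkj
    rw [hEo i k (Ne.symm hki), hEo k j hkj]
    simp only [hmixo i k (Ne.symm hki), hmixo k j hkj]
    have e : ∀ ω, (W i k * S ω i k) * (W k j * S ω k j)
        = (W i k * W k j) * (S ω i k * S ω k j) := fun ω => by ring
    simp only [e]
    rw [integral_const_mul, key i k k j (fun h => hki h.1.symm) (fun h => hij h.1)]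
    ring
  -- diagonal-touching off-diagonal term
  have Dd_off : ∀ i j : Fin M, i ≠ j →
      (∫ ω, mixingMatrix W (S ω) i i * mixingMatrix W (S ω) i j ∂μ) - Ebar i i * Ebar i j
        = W i j ^ 2 * (P i j ^ 2 - P i j) := by
    intro i j hij
    have e : ∀ ω, mixingMatrix W (S ω) i i * mixingMatrix W (S ω) i j
        = W i j * S ω i j - ∑ l, (W i l * W i j) * (S ω i l * S ω i j) := by
      intro ω
      rw [hmixd i ω, hmixo i j hij ω, sub_mul, one_mul, Finset.sum_mul]
      congr 1
      exact Finset.sum_congr rfl fun l _ => by ring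
    rw [integral_congr_ae (Filter.Eventually.of_forall e),
      integral_sub ((hintS i j).const_mul _)
        (integrable_finset_sum _ fun l _ => (hintSS i l i j).const_mul _),
      integral_const_mul, hmean,
      integral_finset_sum _ fun l _ => (hintSS i l i j).const_mul _]
    simp only [integral_const_mul]
    have hs : ∑ l, (W i l * W i j) * (∫ ω, S ω i l * S ω i j ∂μ)
        = (∑ l, (W i l * W i j) * (P i l * P i j)) - W i j ^ 2 * P i j ^ 2
          + W i j ^ 2 * P i j := by
      have h1 : ∀ l ∈ Finset.univ.erase j,
          (W i l * W i j) * (∫ ω, S ω i l * S ω i j ∂μ)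
            = (W i l * W i j) * (P i l * P i j) := by
        intro l hl
        rw [key i l i j (fun h => (Finset.mem_erase.mp hl).1 h.2) (fun h => hij h.1)]
      rw [← Finset.add_sum_erase _ (fun l => (W i l * W i j) * (∫ ω, S ω i l * S ω i j ∂μ))
          (Finset.mem_univ j),
        ← Finset.add_sum_erase _ (fun l => (W i l * W i j) * (P i l * P i j))
          (Finset.mem_univ j),
        Finset.sum_congr rfl h1, keyself i j]
      ring
    have h6 : ∑ l, (W i l * W i j) * (P i l * P i j)
        = (∑ l, W i l * P i l) * (W i j * P i j) := by
      rw [Finset.sum_mul]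
      exact Finset.sum_congr rfl fun l _ => by ring
    rw [hs, h6, hEd i, hEo i j hij]
    ring
  -- diagonal term, off-diagonal entries of the square
  have Dd_diag_k : ∀ i k : Fin M, k ≠ i →
      (∫ ω, mixingMatrix W (S ω) i k * mixingMatrix W (S ω) k i ∂μ) - Ebar i k * Ebar k i
        = W i k ^ 2 * (P i k - P i k ^ 2) := by
    intro i k hki
    have hik : i ≠ k := Ne.symm hki
    rw [hEo i k hik, hEo k i hki]
    have e : ∀ ω, mixingMatrix W (S ω) i k * mixingMatrix W (S ω) k i
        = (W i k * W k i) * (S ω i k * S ω i k) := fun ω => by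
      rw [hmixo i k hik ω, hmixo k i hki ω, hswap i k ω]; ring
    rw [integral_congr_ae (Filter.Eventually.of_forall e), integral_const_mul, keyself i k,
      hWs i k, hPsym i k]
    ring
  -- diagonal term, diagonal entry of the square
  have Dd_diag_i : ∀ i : Fin M,
      (∫ ω, mixingMatrix W (S ω) i i * mixingMatrix W (S ω) i i ∂μ) - Ebar i i * Ebar i i
        = ∑ l, W i l ^ 2 * (P i l - P i l ^ 2) := by
    intro i
    have e : ∀ ω, mixingMatrix W (S ω) i i * mixingMatrix W (S ω) i i
        = 1 - (∑ l, (2 * W i l) * S ω i l)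
          + ∑ l, ∑ m, (W i l * W i m) * (S ω i l * S ω i m) := by
      intro ω
      rw [hmixd i ω]
      have h2 : (∑ l, (2 * W i l) * S ω i l)
          = (∑ l, W i l * S ω i l) + (∑ l, W i l * S ω i l) := by
        rw [← Finset.sum_add_distrib]
        exact Finset.sum_congr rfl fun l _ => by ring
      have h3 : (∑ l, W i l * S ω i l) * (∑ m, W i m * S ω i m)
          = ∑ l, ∑ m, (W i l * W i m) * (S ω i l * S ω i m) := by
        rw [Finset.sum_mul_sum]
        exact Finset.sum_congr rfl fun l _ => Finset.sum_congr rfl fun m _ => by ring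
      rw [h2, ← h3]; ring
    have I1 : Integrable (fun ω => 1 - ∑ l, (2 * W i l) * S ω i l) μ :=
      (integrable_const 1).sub
        (integrable_finset_sum _ fun l _ => (hintS i l).const_mul _)
    have I2 : Integrable
        (fun ω => ∑ l, ∑ m, (W i l * W i m) * (S ω i l * S ω i m)) μ :=
      integrable_finset_sum _ fun l _ =>
        integrable_finset_sum _ fun m _ => (hintSS i l i m).const_mul _
    rw [integral_congr_ae (Filter.Eventually.of_forall e),
      integral_add I1 I2,
      integral_sub (integrable_const 1)
        (integrable_finset_sum _ fun l _ => (hintS i l).const_mul _),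
      integral_const,
      integral_finset_sum _ fun l _ => (hintS i l).const_mul _,
      integral_finset_sum _ fun l _ =>
        integrable_finset_sum _ fun m _ => (hintSS i l i m).const_mul _,
      Finset.sum_congr rfl fun l _ =>
        integral_finset_sum _ fun m _ => (hintSS i l i m).const_mul _]
    simp only [integral_const_mul, hmean, measure_univ, probReal_univ, ENNReal.toReal_one, smul_eq_mul, one_mul, mul_one]
    have hq : ∀ l, ∑ m, (W i l * W i m) * (∫ ω, S ω i l * S ω i m ∂μ)
        = (∑ m, (W i l * W i m) * (P i l * P i m)) + W i l ^ 2 * (P i l - P i l ^ 2) := by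
      intro l
      have h1 : ∀ m ∈ Finset.univ.erase l,
          (W i l * W i m) * (∫ ω, S ω i l * S ω i m ∂μ)
            = (W i l * W i m) * (P i l * P i m) := by
        intro m hm
        rw [key i l i m (fun h => (Finset.mem_erase.mp hm).1 h.2.symm)
          (fun h => (Finset.mem_erase.mp hm).1 (h.2.trans h.1).symm)]
      rw [← Finset.add_sum_erase _ (fun m => (W i l * W i m) * (∫ ω, S ω i l * S ω i m ∂μ))
          (Finset.mem_univ l),
        ← Finset.add_sum_erase _ (fun m => (W i l * W i m) * (P i l * P i m))
          (Finset.mem_univ l),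
        Finset.sum_congr rfl h1, keyself i l]
      ring
    rw [Finset.sum_congr rfl fun l _ => hq l, Finset.sum_add_distrib]
    have h4 : (∑ l, W i l * P i l) * (∑ m, W i m * P i m)
        = ∑ l, ∑ m, (W i l * W i m) * (P i l * P i m) := by
      rw [Finset.sum_mul_sum]
      exact Finset.sum_congr rfl fun l _ => Finset.sum_congr rfl fun m _ => by ring
    have h5 : (∑ l, (2 * W i l) * P i l) = 2 * ∑ l, W i l * P i l := by
      rw [Finset.mul_sum]
      exact Finset.sum_congr rfl fun l _ => by ring
    rw [h5, ← h4, hEd i]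
    ring
  constructor
  · -- diagonal entries
    intro i
    rw [hWt' i i, ← Finset.add_sum_erase _ _ (Finset.mem_univ i), Dd_diag_i i,
      Finset.sum_congr rfl (fun k hk => Dd_diag_k i k (Finset.mem_erase.mp hk).1)]
    have hv : ∀ k, W i k ^ 2 * (P i k - P i k ^ 2) = (W k i) ^ 2 * (P k i - (P k i) ^ 2) :=
      fun k => by rw [hWs i k, hPsym i k]
    have hfull : (∑ l, W i l ^ 2 * (P i l - P i l ^ 2))
        = ∑ l ∈ Finset.univ.erase i, W i l ^ 2 * (P i l - P i l ^ 2) :=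
      (Finset.sum_erase _ (by simp [hPdiag])).symm
    rw [hfull, Finset.sum_congr rfl fun k _ => hv k]
    ring
  · -- off-diagonal entries
    intro i j hij
    rw [hWt' i j]
    have hterm : ∀ k,
        (∫ ω, mixingMatrix W (S ω) i k * mixingMatrix W (S ω) k j ∂μ) - Ebar i k * Ebar k j
          = (if k = i then W i j ^ 2 * (P i j ^ 2 - P i j) else 0)
            + (if k = j then W i j ^ 2 * (P i j ^ 2 - P i j) else 0) := by
      intro k
      rcases eq_or_ne k i with hki | hki
      · rw [if_pos hki, if_neg (show k ≠ j from fun hkj => hij (hki.symm.trans hkj)),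
          add_zero, hki]
        exact Dd_off i j hij
      rcases eq_or_ne k j with hkj | hkj
      · rw [if_neg hki, if_pos hkj, zero_add, hkj]
        have e : ∀ ω, mixingMatrix W (S ω) i j * mixingMatrix W (S ω) j j
            = mixingMatrix W (S ω) j j * mixingMatrix W (S ω) j i := fun ω => by
          rw [hmixo i j hij ω, hmixo j i (Ne.symm hij) ω, hswap i j ω, hWs i j]; ring
        have eE : Ebar i j * Ebar j j = Ebar j j * Ebar j i := by
          rw [hEo i j hij, hEo j i (Ne.symm hij), hWs i j, hPsym i j]; ring
        rw [integral_congr_ae (Filter.Eventually.of_forall e), eE,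
          Dd_off j i (Ne.symm hij), hWs i j, hPsym i j]
      · rw [if_neg hki, if_neg hkj, Dcross i j k hij hki hkj, sub_self, add_zero]
    rw [Finset.sum_congr rfl fun k _ => hterm k, Finset.sum_add_distrib]
    simp only [Finset.sum_ite_eq', Finset.mem_univ, if_true]
    ring
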